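/- Let M be the monoid presented by ⟨ a, a⁻¹, b, b⁻¹, h | aa⁻¹=a⁻¹a=bb⁻¹=b⁻¹b=1, xh=hx, hxy=hyx (x,y ∈ {a,a⁻¹,b,b⁻¹}), h²a=h²a⁻¹=h²b=h²b⁻¹=h³=h² ⟩. Then the group of units of M is isomorphic to the free group of rank 2. -/

import Mathlib

/-- The five generating letters `a, a⁻¹, b, b⁻¹, h`. -/
inductive L : Type
  | a | a' | b | b' | h
deriving DecidableEq

/-- Words over the five letters. -/
abbrev W : Type := FreeMonoid L

/-- The one-letter word. -/
def gen (x : L) : W := FreeMonoid.of x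

open L in
/-- The defining relations of the monoid `M`. -/
inductive rel : W → W → Prop
  | inv_aa' : rel (gen a * gen a') 1
  | inv_a'a : rel (gen a' * gen a) 1
  | inv_bb' : rel (gen b * gen b') 1
  | inv_b'b : rel (gen b' * gen b) 1
  | comm (x : L) (hx : x ≠ h) : rel (gen x * gen h) (gen h * gen x)
  | swap (x y : L) (hx : x ≠ h) (hy : y ≠ h) :
      rel (gen h * gen x * gen y) (gen h * gen y * gen x)
  | zero (x : L) (hx : x ≠ h) : rel (gen h * gen h * gen x) (gen h * gen h)
  | zero_h : rel (gen h * gen h * gen h) (gen h * gen h)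

/-- The congruence on the free monoid generated by the defining relations. -/
def Mcon : Con W := conGen rel

/-- The monoid `M` defined by the presentation. -/
abbrev M : Type := Mcon.Quotient

/-- The canonical projection from words to elements of `M`. -/
def π : W →* M := Mcon.mk'

/-! ### Auxiliary development -/

/-- Target monoid: free group with two extra "levels" recording `h`-count. -/
inductive NN : Type
  | g : FreeGroup Bool → NN
  | one1 : NN
  | two : NN

namespace NN

def mul' : NN → NN → NN
  | g x, g y => g (x * y)
  | g _, one1 => one1
  | one1, g _ => one1
  | one1, one1 => two
  | _, two => two
  | two, _ => two

instance : Mul NN := ⟨mul'⟩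
instance : One NN := ⟨g 1⟩

lemma mul_def (p q : NN) : p * q = mul' p q := rfl

instance : Monoid NN where
  mul_assoc p q r := by
    cases p <;> cases q <;> cases r <;> simp [mul_def, mul', mul_assoc]
  one_mul p := by cases p <;> simp [mul_def, mul', One.one]
  mul_one p := by cases p <;> simp [mul_def, mul', One.one]

lemma one_def : (1 : NN) = g 1 := rfl

lemma isG_of_mul_g {p q : NN} {x : FreeGroup Bool} (hpq : p * q = g x) :
    (∃ y, p = g y) ∧ ∃ y, q = g y := by
  cases p <;> cases q <;> simp_all [mul_def, mul']

/-- Extract the group element from a level-0 element. -/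
def ex : NN → FreeGroup Bool
  | g x => x
  | _ => 1

end NN

open L

/-- Letter images in `NN`. -/
def ΦL : L → NN
  | a => NN.g (FreeGroup.of true)
  | a' => NN.g (FreeGroup.of true)⁻¹
  | b => NN.g (FreeGroup.of false)
  | b' => NN.g (FreeGroup.of false)⁻¹
  | h => NN.one1

def Φ : W →* NN := FreeMonoid.lift ΦL

lemma Φ_gen (x : L) : Φ (gen x) = ΦL x := rfl

lemma Φ_rel {w w' : W} (r : rel w w') : Φ w = Φ w' := by
  cases r with
  | inv_aa' => simp [map_mul, Φ_gen, ΦL, NN.mul_def, NN.mul', NN.one_def]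
  | inv_a'a => simp [map_mul, Φ_gen, ΦL, NN.mul_def, NN.mul', NN.one_def]
  | inv_bb' => simp [map_mul, Φ_gen, ΦL, NN.mul_def, NN.mul', NN.one_def]
  | inv_b'b => simp [map_mul, Φ_gen, ΦL, NN.mul_def, NN.mul', NN.one_def]
  | comm x hx => cases x <;> simp_all [map_mul, Φ_gen, ΦL, NN.mul_def, NN.mul']
  | swap x y hx hy =>
      cases x <;> cases y <;> simp_all [map_mul, Φ_gen, ΦL, NN.mul_def, NN.mul']
  | zero x hx => cases x <;> simp_all [map_mul, Φ_gen, ΦL, NN.mul_def, NN.mul']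
  | zero_h => simp [map_mul, Φ_gen, ΦL, NN.mul_def, NN.mul']

lemma Mcon_le_ker : Mcon ≤ Con.ker Φ :=
  Con.conGen_le.mpr fun _ _ r => (Con.ker_rel Φ).mpr (Φ_rel r)

/-- The induced map `M →* NN`. -/
def Φbar : M →* NN := Mcon.lift Φ Mcon_le_ker

lemma Φbar_π (w : W) : Φbar (π w) = Φ w := Con.lift_mk' Mcon_le_ker w

lemma π_rel {w w' : W} (r : rel w w') : π w = π w' :=
  Mcon.eq.mpr (ConGen.Rel.of _ _ r)

lemma π_mul_one {x y : L} (r : rel (gen x * gen y) 1) :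
    π (gen x) * π (gen y) = 1 := by
  rw [← map_mul, π_rel r, map_one]

/-- The unit `a`. -/
def ua : Mˣ := ⟨π (gen a), π (gen a'), π_mul_one rel.inv_aa', π_mul_one rel.inv_a'a⟩

/-- The unit `b`. -/
def ub : Mˣ := ⟨π (gen b), π (gen b'), π_mul_one rel.inv_bb', π_mul_one rel.inv_b'b⟩

/-- The homomorphism `FreeGroup Bool →* Mˣ`. -/
def σ : FreeGroup Bool →* Mˣ := FreeGroup.lift fun t => if t then ua else ub

lemma σ_true : σ (FreeGroup.of true) = ua := by simp [σ]
lemma σ_false : σ (FreeGroup.of false) = ub := by simp [σ]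

/-- Letter images in the free group. -/
def fl : L → FreeGroup Bool
  | a => FreeGroup.of true
  | a' => (FreeGroup.of true)⁻¹
  | b => FreeGroup.of false
  | b' => (FreeGroup.of false)⁻¹
  | h => 1

lemma σ_fl {l : L} (hl : l ≠ h) : ((σ (fl l) : Mˣ) : M) = π (gen l) := by
  cases l
  · rw [fl, σ_true]; rfl
  · rw [fl, map_inv, σ_true]; rfl
  · rw [fl, σ_false]; rfl
  · rw [fl, map_inv, σ_false]; rfl
  · exact absurd rfl hl

/-- Every `h`-free word maps into the image of `σ`. -/
lemma π_eq_σ (w : W) (hw : ∀ l ∈ FreeMonoid.toList w, l ≠ h) :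
    π w = ↑(σ ((FreeMonoid.toList w).map fl).prod) := by
  induction w using FreeMonoid.inductionOn' with
  | one => simp
  | of_mul x xs ih =>
      rw [FreeMonoid.toList_of_mul] at hw ⊢
      have hx : x ≠ h := hw x List.mem_cons_self
      have hxs : ∀ l ∈ FreeMonoid.toList xs, l ≠ h := fun l hl => hw l (List.mem_cons_of_mem _ hl)
      rw [map_mul, ih hxs, List.map_cons, List.prod_cons, map_mul, Units.val_mul, σ_fl hx]
      rfl

lemma Φ_isG_no_h (w : W) (hG : ∃ x, Φ w = NN.g x) :
    ∀ l ∈ FreeMonoid.toList w, l ≠ h := by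
  induction w using FreeMonoid.inductionOn' with
  | one => simp
  | of_mul x xs ih =>
      obtain ⟨y, hy⟩ := hG
      rw [map_mul] at hy
      obtain ⟨⟨z1, hz1⟩, ⟨z2, hz2⟩⟩ := NN.isG_of_mul_g hy
      rw [FreeMonoid.toList_of_mul]
      intro l hl
      rcases List.mem_cons.mp hl with rfl | hl
      · intro hlh; subst hlh
        rw [show Φ (FreeMonoid.of L.h) = NN.one1 from rfl] at hz1
        exact NN.noConfusion hz1
      · exact ih ⟨z2, hz2⟩ l hl

lemma unit_isG (u : Mˣ) : ∃ x, Φbar ↑u = NN.g x := by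
  have h1 : Φbar ↑u * Φbar ↑u⁻¹ = NN.g 1 := by
    rw [← map_mul, Units.mul_inv, map_one]; rfl
  exact (NN.isG_of_mul_g h1).1

lemma σ_surjective : Function.Surjective σ := by
  intro u
  obtain ⟨w, hw'⟩ := Con.mk'_surjective (u : M)
  have hw : π w = ↑u := hw'
  have hG : ∃ x, Φ w = NN.g x := by
    obtain ⟨x, hx⟩ := unit_isG u
    exact ⟨x, by rw [← Φbar_π w, hw]; exact hx⟩
  refine ⟨((FreeMonoid.toList w).map fl).prod, Units.ext ?_⟩
  rw [← (π_eq_σ w (Φ_isG_no_h w hG)), hw]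

/-- Units of `NN` extract to the free group. -/
def unG : NN ˣ →* FreeGroup Bool where
  toFun u := NN.ex ↑u
  map_one' := rfl
  map_mul' u v := by
    have h1 : (↑u : NN) * ↑u⁻¹ = NN.g 1 := by rw [Units.mul_inv]; rfl
    have h2 : (↑v : NN) * ↑v⁻¹ = NN.g 1 := by rw [Units.mul_inv]; rfl
    obtain ⟨x, hx⟩ := (NN.isG_of_mul_g h1).1
    obtain ⟨y, hy⟩ := (NN.isG_of_mul_g h2).1
    simp [Units.val_mul, hx, hy, NN.mul_def, NN.mul', NN.ex]

/-- Retraction `Mˣ →* FreeGroup Bool`. -/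
def τ : Mˣ →* FreeGroup Bool := unG.comp (Units.map Φbar)

lemma τ_σ : τ.comp σ = MonoidHom.id (FreeGroup Bool) := by
  apply FreeGroup.ext_hom
  intro t
  cases t
  · show τ (σ (FreeGroup.of false)) = FreeGroup.of false
    rw [σ_false]
    show NN.ex (Φbar (π (gen b))) = FreeGroup.of false
    rw [Φbar_π, Φ_gen]; rfl
  · show τ (σ (FreeGroup.of true)) = FreeGroup.of true
    rw [σ_true]
    show NN.ex (Φbar (π (gen a))) = FreeGroup.of true
    rw [Φbar_π, Φ_gen]; rfl

lemma σ_injective : Function.Injective σ := by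
  intro x y hxy
  have := DFunLike.congr_fun τ_σ
  calc x = τ (σ x) := (this x).symm
    _ = τ (σ y) := by rw [hxy]
    _ = y := this y

/-- The group of units of `M` is isomorphic to the free group
of rank 2. -/
theorem stmt_16 : Nonempty (Mˣ ≃* FreeGroup Bool) := by
  exact ⟨(MulEquiv.ofBijective σ ⟨σ_injective, σ_surjective⟩).symm⟩
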